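/- Let φ and Φ̄ be the density and survival function of a Gaussian distribution N(μ, σ²). Then with T(x) = exp(x²), the function x ↦ φ(x)/T'(x) is T-regularly varying with index −1/(2σ²) − 1, and Φ̄ is T-regularly varying with index −1/(2σ²); that is, Φ̄(T^{-1}(T(t)T(x)))/Φ̄(T^{-1}(T(t))) → T(x)^{−1/(2σ²)} as t → ∞, for all x ≥ 0. -/

import Mathlib

open Filter Topology MeasureTheory

/-- Gaussian probability density with mean `μ` and standard deviation `σ`. -/
noncomputable def gaussPdf (μ σ : ℝ) (x : ℝ) : ℝ :=
  (Real.sqrt (2 * Real.pi * σ ^ 2))⁻¹ * Real.exp (-(x - μ) ^ 2 / (2 * σ ^ 2))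

lemma gaussPdf_pos (μ σ : ℝ) (hσ : 0 < σ) (z : ℝ) : 0 < gaussPdf μ σ z := by
  unfold gaussPdf
  have : 0 < 2 * Real.pi * σ ^ 2 := by positivity
  positivity

lemma gaussPdf_ratio (μ σ : ℝ) (hσ : 0 < σ) (a b : ℝ) :
    gaussPdf μ σ a / gaussPdf μ σ b =
      Real.exp (((b - μ) ^ 2 - (a - μ) ^ 2) / (2 * σ ^ 2)) := by
  unfold gaussPdf
  have hc : ((Real.sqrt (2 * Real.pi * σ ^ 2))⁻¹ : ℝ) ≠ 0 := by
    have : 0 < 2 * Real.pi * σ ^ 2 := by positivity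
    positivity
  rw [mul_div_mul_left _ _ hc, ← Real.exp_sub]
  congr 1
  ring

lemma gaussPdf_continuous (μ σ : ℝ) : Continuous (gaussPdf μ σ) := by
  unfold gaussPdf
  fun_prop

lemma gaussPdf_tendsto_zero (μ σ : ℝ) (hσ : 0 < σ) :
    Tendsto (gaussPdf μ σ) atTop (𝓝 0) := by
  have h1 : Tendsto (fun z : ℝ => z - μ) atTop atTop :=
    tendsto_atTop_add_const_right _ (-μ) tendsto_id
  have h2 : Tendsto (fun z : ℝ => (z - μ) ^ 2) atTop atTop := by
    have := h1.atTop_mul_atTop₀ h1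
    simpa [pow_two] using this
  have h3 : Tendsto (fun z : ℝ => -(z - μ) ^ 2 / (2 * σ ^ 2)) atTop atBot := by
    have := tendsto_neg_atTop_atBot.comp (h2.atTop_div_const (show (0:ℝ) < 2 * σ ^ 2 by positivity))
    simpa [Function.comp_def, neg_div] using this
  have h4 : Tendsto (fun z : ℝ => Real.exp (-(z - μ) ^ 2 / (2 * σ ^ 2))) atTop (𝓝 0) :=
    Real.tendsto_exp_atBot.comp h3
  have := h4.const_mul ((Real.sqrt (2 * Real.pi * σ ^ 2))⁻¹)
  simp only [mul_zero] at this
  exact this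

section Sqrt
variable {x : ℝ} (hx : 0 ≤ x)

lemma s_sq (t : ℝ) : Real.sqrt (t ^ 2 + x ^ 2) ^ 2 = t ^ 2 + x ^ 2 :=
  Real.sq_sqrt (by positivity)

lemma s_ge (t : ℝ) (ht : 0 ≤ t) : t ≤ Real.sqrt (t ^ 2 + x ^ 2) :=
  Real.le_sqrt_of_sq_le (by nlinarith)

lemma s_tendsto : Tendsto (fun t : ℝ => Real.sqrt (t ^ 2 + x ^ 2)) atTop atTop := by
  apply tendsto_atTop_mono' _ _ tendsto_id
  filter_upwards [eventually_ge_atTop (0:ℝ)] with t ht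
  exact s_ge t ht

lemma s_sub_tendsto : Tendsto (fun t : ℝ => Real.sqrt (t ^ 2 + x ^ 2) - t) atTop (𝓝 0) := by
  have hden : Tendsto (fun t : ℝ => Real.sqrt (t ^ 2 + x ^ 2) + t) atTop atTop := by
    apply tendsto_atTop_mono' _ _ tendsto_id
    filter_upwards [eventually_ge_atTop (0:ℝ)] with t ht
    have := Real.sqrt_nonneg (t ^ 2 + x ^ 2)
    simp only [id]
    linarith
  have h0 : Tendsto (fun t : ℝ => x ^ 2 / (Real.sqrt (t ^ 2 + x ^ 2) + t)) atTop (𝓝 0) :=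
    tendsto_const_nhds.div_atTop hden
  apply h0.congr'
  filter_upwards [eventually_gt_atTop (0:ℝ)] with t ht
  have hs : 0 < Real.sqrt (t ^ 2 + x ^ 2) + t := by
    have := Real.sqrt_nonneg (t ^ 2 + x ^ 2); linarith
  field_simp
  nlinarith [s_sq (x := x) t]

lemma s_div_tendsto : Tendsto (fun t : ℝ => Real.sqrt (t ^ 2 + x ^ 2) / t) atTop (𝓝 1) := by
  have h1 : Tendsto (fun t : ℝ => 1 + (Real.sqrt (t ^ 2 + x ^ 2) - t) * t⁻¹) atTop (𝓝 1) := by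
    have := s_sub_tendsto (x := x) |>.mul tendsto_inv_atTop_zero
    simpa using (tendsto_const_nhds (x := (1:ℝ))).add this
  apply h1.congr'
  filter_upwards [eventually_gt_atTop (0:ℝ)] with t ht
  field_simp
  ring

lemma div_s_tendsto : Tendsto (fun t : ℝ => t / Real.sqrt (t ^ 2 + x ^ 2)) atTop (𝓝 1) := by
  have := (s_div_tendsto (x := x)).inv₀ one_ne_zero
  simpa [inv_div] using this

end Sqrt

lemma pdf_ratio_tendsto (μ σ : ℝ) (hσ : 0 < σ) (x : ℝ) :
    Tendsto (fun t : ℝ => gaussPdf μ σ (Real.sqrt (t ^ 2 + x ^ 2)) / gaussPdf μ σ t) atTop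
      (𝓝 (Real.exp (-x ^ 2 / (2 * σ ^ 2)))) := by
  have harg : Tendsto
      (fun t : ℝ => (-x ^ 2 + 2 * μ * (Real.sqrt (t ^ 2 + x ^ 2) - t)) / (2 * σ ^ 2)) atTop
      (𝓝 (-x ^ 2 / (2 * σ ^ 2))) := by
    have := ((tendsto_const_nhds (x := -x ^ 2)).add
      ((s_sub_tendsto (x := x)).const_mul (2 * μ))).div_const (2 * σ ^ 2)
    simpa using this
  have h2 := (Real.continuous_exp.tendsto _).comp harg
  apply h2.congr
  intro t
  rw [gaussPdf_ratio μ σ hσ]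
  simp only [Function.comp]
  congr 1
  have hs := s_sq (x := x) t
  have : (t - μ) ^ 2 - (Real.sqrt (t ^ 2 + x ^ 2) - μ) ^ 2 =
      -x ^ 2 + 2 * μ * (Real.sqrt (t ^ 2 + x ^ 2) - t) := by nlinarith [hs]
  rw [this]

lemma part1 (μ σ : ℝ) (hσ : 0 < σ) (x : ℝ) (hx : 0 ≤ x) :
    Tendsto (fun t =>
        (gaussPdf μ σ (Real.sqrt (t ^ 2 + x ^ 2)) /
          (2 * Real.sqrt (t ^ 2 + x ^ 2) * Real.exp (Real.sqrt (t ^ 2 + x ^ 2) ^ 2))) /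
        (gaussPdf μ σ t / (2 * t * Real.exp (t ^ 2))))
      atTop (𝓝 (Real.exp (x ^ 2) ^ (-(1 : ℝ) / (2 * σ ^ 2) - 1))) := by
  have hL : Real.exp (x ^ 2) ^ (-(1 : ℝ) / (2 * σ ^ 2) - 1) =
      Real.exp (-x ^ 2 / (2 * σ ^ 2)) * 1 * Real.exp (-x ^ 2) := by
    rw [Real.rpow_def_of_pos (Real.exp_pos _), Real.log_exp, mul_one, ← Real.exp_add]
    congr 1
    field_simp
    ring
  rw [hL]
  have h := ((pdf_ratio_tendsto μ σ hσ x).mul (div_s_tendsto (x := x))).mul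
    (tendsto_const_nhds (x := Real.exp (-x ^ 2)))
  apply h.congr'
  filter_upwards [eventually_gt_atTop (0 : ℝ)] with t ht
  have hspos : 0 < Real.sqrt (t ^ 2 + x ^ 2) := lt_of_lt_of_le ht (s_ge t ht.le)
  have hs2 := s_sq (x := x) t
  rw [hs2]
  have hψt := (gaussPdf_pos μ σ hσ t).ne'
  have he : Real.exp (t ^ 2 + x ^ 2) = Real.exp (t ^ 2) * Real.exp (x ^ 2) := Real.exp_add _ _
  rw [he, Real.exp_neg]
  have h1 : Real.exp (t ^ 2) ≠ 0 := (Real.exp_pos _).ne'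
  have h2 : Real.exp (x ^ 2) ≠ 0 := (Real.exp_pos _).ne'
  field_simp

lemma hasDerivAt_gaussPdf (μ σ : ℝ) (hσ : 0 < σ) (z : ℝ) :
    HasDerivAt (gaussPdf μ σ) (-(z - μ) / σ ^ 2 * gaussPdf μ σ z) z := by
  have h1 : HasDerivAt (fun z : ℝ => -(z - μ) ^ 2 / (2 * σ ^ 2)) (-(z - μ) / σ ^ 2) z := by
    have h0 : HasDerivAt (fun z : ℝ => (z - μ) ^ 2) (2 * (z - μ)) z := by
      have := ((hasDerivAt_id z).sub_const μ).pow 2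
      simpa [mul_comm, Pi.pow_def] using this
    have := (h0.neg).div_const (2 * σ ^ 2)
    convert this using 1
    · rfl
    · rfl
    · rfl
    field_simp
  have h2 := (h1.exp).const_mul ((Real.sqrt (2 * Real.pi * σ ^ 2))⁻¹)
  convert h2 using 1
  · rfl
  · rfl
  · rfl
  unfold gaussPdf
  ring

lemma integrable_gaussPdf (μ σ : ℝ) (hσ : 0 < σ) : Integrable (gaussPdf μ σ) := by
  have hb : (0 : ℝ) < 1 / (2 * σ ^ 2) := by positivity
  have h1 : Integrable (fun z : ℝ => Real.exp (-(1 / (2 * σ ^ 2)) * (z - μ) ^ 2)) :=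
    (integrable_exp_neg_mul_sq hb).comp_sub_right μ
  have := h1.const_mul ((Real.sqrt (2 * Real.pi * σ ^ 2))⁻¹)
  apply this.congr
  refine Eventually.of_forall fun z => ?_
  show _ = gaussPdf μ σ z
  unfold gaussPdf
  rw [show -(z - μ) ^ 2 / (2 * σ ^ 2) = -(1 / (2 * σ ^ 2)) * (z - μ) ^ 2 by field_simp]

lemma integrable_mul_gaussPdf (μ σ : ℝ) (hσ : 0 < σ) :
    Integrable (fun z => (z - μ) * gaussPdf μ σ z) := by
  have hb : (0 : ℝ) < 1 / (2 * σ ^ 2) := by positivity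
  have h1 : Integrable (fun z : ℝ => (z - μ) * Real.exp (-(1 / (2 * σ ^ 2)) * (z - μ) ^ 2)) :=
    (integrable_mul_exp_neg_mul_sq hb).comp_sub_right μ
  have := h1.const_mul ((Real.sqrt (2 * Real.pi * σ ^ 2))⁻¹)
  apply this.congr
  refine Eventually.of_forall fun z => ?_
  show _ = (z - μ) * gaussPdf μ σ z
  unfold gaussPdf
  rw [show -(z - μ) ^ 2 / (2 * σ ^ 2) = -(1 / (2 * σ ^ 2)) * (z - μ) ^ 2 by field_simp]
  ring

noncomputable def millsLower (μ σ : ℝ) (z : ℝ) : ℝ :=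
  σ ^ 2 * gaussPdf μ σ z * ((z - μ) / ((z - μ) ^ 2 + σ ^ 2))

noncomputable def corr (μ σ : ℝ) (z : ℝ) : ℝ :=
  gaussPdf μ σ z * (2 * σ ^ 4 / (((z - μ) ^ 2 + σ ^ 2) ^ 2))

lemma integral_Ioi_mul_gaussPdf (μ σ : ℝ) (hσ : 0 < σ) (t : ℝ) :
    ∫ z in Set.Ioi t, (z - μ) * gaussPdf μ σ z = σ ^ 2 * gaussPdf μ σ t := by
  have hd : ∀ z ∈ Set.Ici t, HasDerivAt (fun z => -σ ^ 2 * gaussPdf μ σ z)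
      ((z - μ) * gaussPdf μ σ z) z := by
    intro z _
    have := (hasDerivAt_gaussPdf μ σ hσ z).const_mul (-σ ^ 2)
    convert this using 1
    · rfl
    · rfl
    field_simp
  have hlim : Tendsto (fun z => -σ ^ 2 * gaussPdf μ σ z) atTop (𝓝 0) := by
    have := (gaussPdf_tendsto_zero μ σ hσ).const_mul (-σ ^ 2)
    simpa using this
  have := integral_Ioi_of_hasDerivAt_of_tendsto' hd
    (integrable_mul_gaussPdf μ σ hσ).integrableOn hlim
  rw [this]
  ring

lemma hasDerivAt_millsLower (μ σ : ℝ) (hσ : 0 < σ) (z : ℝ) :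
    HasDerivAt (millsLower μ σ) (-gaussPdf μ σ z + corr μ σ z) z := by
  have hden : (0:ℝ) < (z - μ) ^ 2 + σ ^ 2 := by positivity
  have h1 : HasDerivAt (fun z => σ ^ 2 * gaussPdf μ σ z)
      (σ ^ 2 * (-(z - μ) / σ ^ 2 * gaussPdf μ σ z)) z :=
    (hasDerivAt_gaussPdf μ σ hσ z).const_mul (σ ^ 2)
  have hnum : HasDerivAt (fun z : ℝ => z - μ) 1 z := (hasDerivAt_id z).sub_const μ
  have hden' : HasDerivAt (fun z : ℝ => (z - μ) ^ 2 + σ ^ 2) (2 * (z - μ)) z := by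
    have := (((hasDerivAt_id z).sub_const μ).pow 2).add_const (σ ^ 2)
    simpa [mul_comm] using this
  have hq := hnum.div hden' hden.ne'
  have := h1.mul hq
  unfold millsLower corr
  convert this using 1
  · rfl
  · rfl
  · rfl
  have hσ2 : (σ:ℝ) ^ 2 ≠ 0 := by positivity
  simp only [Pi.div_apply]
  field_simp
  ring

lemma corr_nonneg (μ σ : ℝ) (hσ : 0 < σ) (z : ℝ) : 0 ≤ corr μ σ z := by
  unfold corr
  have h := (gaussPdf_pos μ σ hσ z).le
  positivity

lemma integrable_corr (μ σ : ℝ) (hσ : 0 < σ) : Integrable (corr μ σ) := by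
  apply Integrable.mono' ((integrable_gaussPdf μ σ hσ).const_mul 2)
  · apply Continuous.aestronglyMeasurable
    unfold corr
    apply (gaussPdf_continuous μ σ).mul
    apply Continuous.div continuous_const
    · fun_prop
    · intro z
      positivity
  · refine Eventually.of_forall fun z => ?_
    rw [Real.norm_eq_abs, abs_of_nonneg (corr_nonneg μ σ hσ z)]
    unfold corr
    have h := (gaussPdf_pos μ σ hσ z).le
    have hden : (0:ℝ) < ((z - μ) ^ 2 + σ ^ 2) ^ 2 := by positivity
    have hfac : 2 * σ ^ 4 / (((z - μ) ^ 2 + σ ^ 2) ^ 2) ≤ 2 := by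
      rw [div_le_iff₀ hden]
      nlinarith [sq_nonneg (z - μ), sq_nonneg σ, sq_nonneg ((z-μ)^2)]
    nlinarith [gaussPdf_pos μ σ hσ z]

lemma millsLower_tendsto_zero (μ σ : ℝ) (hσ : 0 < σ) :
    Tendsto (millsLower μ σ) atTop (𝓝 0) := by
  have hfac : Tendsto (fun z : ℝ => (z - μ) / ((z - μ) ^ 2 + σ ^ 2)) atTop (𝓝 0) := by
    have hinv : Tendsto (fun z : ℝ => (z - μ)⁻¹) atTop (𝓝 0) :=
      tendsto_inv_atTop_zero.comp (tendsto_atTop_add_const_right _ (-μ) tendsto_id)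
    apply tendsto_of_tendsto_of_tendsto_of_le_of_le' tendsto_const_nhds hinv
    · filter_upwards [eventually_ge_atTop (μ + 1)] with z hz
      have h1 : (0:ℝ) < (z - μ) ^ 2 + σ ^ 2 := by positivity
      have h2 : (0:ℝ) ≤ z - μ := by linarith
      positivity
    · filter_upwards [eventually_ge_atTop (μ + 1)] with z hz
      have h2 : (0:ℝ) < z - μ := by linarith
      rw [div_le_iff₀ (by positivity), inv_mul_eq_div, le_div_iff₀ h2]
      nlinarith
  have := ((gaussPdf_tendsto_zero μ σ hσ).const_mul (σ ^ 2)).mul hfac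
  simp only [mul_zero] at this
  exact this

lemma integral_Ioi_sub_corr (μ σ : ℝ) (hσ : 0 < σ) (t : ℝ) :
    ∫ z in Set.Ioi t, (gaussPdf μ σ z - corr μ σ z) = millsLower μ σ t := by
  have hd : ∀ z ∈ Set.Ici t, HasDerivAt (fun z => -millsLower μ σ z)
      (gaussPdf μ σ z - corr μ σ z) z := by
    intro z _
    have := (hasDerivAt_millsLower μ σ hσ z).neg
    convert this using 1
    · rfl
    · rfl
    · rfl
    ring
  have hlim : Tendsto (fun z => -millsLower μ σ z) atTop (𝓝 0) := by
    have := (millsLower_tendsto_zero μ σ hσ).neg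
    simpa using this
  have := integral_Ioi_of_hasDerivAt_of_tendsto' hd
    ((integrable_gaussPdf μ σ hσ).sub (integrable_corr μ σ hσ)).integrableOn hlim
  rw [this]
  ring

/-- Gaussian survival function. -/
noncomputable def gaussSurv (μ σ : ℝ) (x : ℝ) : ℝ := ∫ z in Set.Ici x, gaussPdf μ σ z

lemma surv_le (μ σ : ℝ) (hσ : 0 < σ) (t : ℝ) (ht : μ < t) :
    gaussSurv μ σ t ≤ σ ^ 2 * gaussPdf μ σ t / (t - μ) := by
  rw [gaussSurv, integral_Ici_eq_integral_Ioi, le_div_iff₀ (by linarith)]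
  calc (∫ z in Set.Ioi t, gaussPdf μ σ z) * (t - μ)
      = ∫ z in Set.Ioi t, gaussPdf μ σ z * (t - μ) := (integral_mul_const _ _).symm
    _ ≤ ∫ z in Set.Ioi t, (z - μ) * gaussPdf μ σ z := by
        apply setIntegral_mono_on
          ((integrable_gaussPdf μ σ hσ).integrableOn.mul_const _)
          (integrable_mul_gaussPdf μ σ hσ).integrableOn measurableSet_Ioi
        intro z hz
        have hz' : t < z := hz
        have h := (gaussPdf_pos μ σ hσ z).le
        nlinarith
    _ = σ ^ 2 * gaussPdf μ σ t := integral_Ioi_mul_gaussPdf μ σ hσ t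

lemma le_surv (μ σ : ℝ) (hσ : 0 < σ) (t : ℝ) :
    millsLower μ σ t ≤ gaussSurv μ σ t := by
  rw [gaussSurv, integral_Ici_eq_integral_Ioi, ← integral_Ioi_sub_corr μ σ hσ t]
  apply setIntegral_mono_on
    ((integrable_gaussPdf μ σ hσ).sub (integrable_corr μ σ hσ)).integrableOn
    (integrable_gaussPdf μ σ hσ).integrableOn measurableSet_Ioi
  intro z _
  show gaussPdf μ σ z - corr μ σ z ≤ gaussPdf μ σ z
  have := corr_nonneg μ σ hσ z
  linarith

lemma millsLower_pos (μ σ : ℝ) (hσ : 0 < σ) (t : ℝ) (ht : μ < t) : 0 < millsLower μ σ t := by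
  unfold millsLower
  have h1 := gaussPdf_pos μ σ hσ t
  have h2 : (0:ℝ) < t - μ := by linarith
  positivity

lemma surv_pos (μ σ : ℝ) (hσ : 0 < σ) (t : ℝ) (ht : μ < t) : 0 < gaussSurv μ σ t :=
  lt_of_lt_of_le (millsLower_pos μ σ hσ t ht) (le_surv μ σ hσ t)

lemma surv_nonneg (μ σ : ℝ) (hσ : 0 < σ) (t : ℝ) : 0 ≤ gaussSurv μ σ t := by
  rw [gaussSurv]
  apply setIntegral_nonneg measurableSet_Ici
  exact fun z _ => (gaussPdf_pos μ σ hσ z).le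

lemma const_div_tendsto (c : ℝ) : Tendsto (fun t : ℝ => c / t) atTop (𝓝 0) := by
  simpa [div_eq_mul_inv] using tendsto_inv_atTop_zero.const_mul c

lemma rA_tendsto (μ σ x : ℝ) (hσ : 0 < σ) :
    Tendsto (fun t : ℝ =>
      ((Real.sqrt (t ^ 2 + x ^ 2) - μ) * (t - μ)) /
        ((Real.sqrt (t ^ 2 + x ^ 2) - μ) ^ 2 + σ ^ 2)) atTop (𝓝 1) := by
  have hμt := const_div_tendsto μ
  have hσt := const_div_tendsto σ
  have hnum : Tendsto (fun t : ℝ =>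
      (Real.sqrt (t ^ 2 + x ^ 2) / t - μ / t) * (1 - μ / t)) atTop (𝓝 1) := by
    have := ((s_div_tendsto (x := x)).sub hμt).mul ((tendsto_const_nhds (x := (1:ℝ))).sub hμt)
    norm_num at this
    exact this
  have hden : Tendsto (fun t : ℝ =>
      (Real.sqrt (t ^ 2 + x ^ 2) / t - μ / t) ^ 2 + (σ / t) ^ 2) atTop (𝓝 1) := by
    have := (((s_div_tendsto (x := x)).sub hμt).pow 2).add (hσt.pow 2)
    norm_num at this
    exact this
  have hq := hnum.div hden one_ne_zero
  norm_num at hq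
  apply hq.congr'
  filter_upwards [eventually_gt_atTop (0 : ℝ)] with t ht
  set s := Real.sqrt (t ^ 2 + x ^ 2) with hs
  have hD1 : (0:ℝ) < (s - μ) ^ 2 + σ ^ 2 := by positivity
  have hD2 : (0:ℝ) < (s / t - μ / t) ^ 2 + (σ / t) ^ 2 := by
    have : (0:ℝ) < (σ / t) ^ 2 := by positivity
    positivity
  simp only [Pi.div_apply]
  rw [div_eq_div_iff hD2.ne' hD1.ne']
  field_simp [ht.ne']
  ring_nf
  rw [hs]
  ring

lemma rB_tendsto (μ σ x : ℝ) (hσ : 0 < σ) :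
    Tendsto (fun t : ℝ =>
      ((t - μ) ^ 2 + σ ^ 2) / ((Real.sqrt (t ^ 2 + x ^ 2) - μ) * (t - μ))) atTop (𝓝 1) := by
  have hμt := const_div_tendsto μ
  have hσt := const_div_tendsto σ
  have hnum : Tendsto (fun t : ℝ => (1 - μ / t) ^ 2 + (σ / t) ^ 2) atTop (𝓝 1) := by
    have := (((tendsto_const_nhds (x := (1:ℝ))).sub hμt).pow 2).add (hσt.pow 2)
    norm_num at this
    exact this
  have hden : Tendsto (fun t : ℝ =>
      (Real.sqrt (t ^ 2 + x ^ 2) / t - μ / t) * (1 - μ / t)) atTop (𝓝 1) := by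
    have := ((s_div_tendsto (x := x)).sub hμt).mul ((tendsto_const_nhds (x := (1:ℝ))).sub hμt)
    norm_num at this
    exact this
  have hq := hnum.div hden one_ne_zero
  norm_num at hq
  apply hq.congr'
  filter_upwards [eventually_gt_atTop (|μ| + 1 : ℝ)] with t ht
  have ht0 : (0:ℝ) < t := lt_of_le_of_lt (by positivity) ht
  have htμ : μ < t := lt_of_le_of_lt (le_abs_self μ) (by linarith)
  set s := Real.sqrt (t ^ 2 + x ^ 2) with hs
  have hst : t ≤ s := s_ge t ht0.le
  have hsμ : (0:ℝ) < s - μ := by linarith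
  have hD1 : (0:ℝ) < (s - μ) * (t - μ) := by
    have : (0:ℝ) < t - μ := by linarith
    positivity
  have hD2 : (0:ℝ) < (s / t - μ / t) * (1 - μ / t) := by
    have h1 : s / t - μ / t = (s - μ) / t := by ring
    have h2 : 1 - μ / t = (t - μ) / t := by field_simp
    rw [h1, h2]
    have : (0:ℝ) < t - μ := by linarith
    positivity
  simp only [Pi.div_apply]
  rw [eq_comm, div_eq_div_iff hD1.ne' hD2.ne']
  field_simp [ht0.ne']

lemma part2 (μ σ : ℝ) (hσ : 0 < σ) (x : ℝ) (hx : 0 ≤ x) :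
    Tendsto (fun t => gaussSurv μ σ (Real.sqrt (t ^ 2 + x ^ 2)) / gaussSurv μ σ t)
      atTop (𝓝 (Real.exp (x ^ 2) ^ (-(1 : ℝ) / (2 * σ ^ 2)))) := by
  have hL : Real.exp (x ^ 2) ^ (-(1 : ℝ) / (2 * σ ^ 2)) = Real.exp (-x ^ 2 / (2 * σ ^ 2)) := by
    rw [Real.rpow_def_of_pos (Real.exp_pos _), Real.log_exp]
    congr 1
    field_simp
  rw [hL]
  -- limits of the lower and upper bounding ratios
  have hA : Tendsto (fun t : ℝ => millsLower μ σ (Real.sqrt (t ^ 2 + x ^ 2)) /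
      (σ ^ 2 * gaussPdf μ σ t / (t - μ))) atTop (𝓝 (Real.exp (-x ^ 2 / (2 * σ ^ 2)))) := by
    have h := (pdf_ratio_tendsto μ σ hσ x).mul (rA_tendsto μ σ x hσ)
    rw [mul_one] at h
    apply h.congr'
    filter_upwards [eventually_gt_atTop (|μ| + 1 : ℝ)] with t ht
    have ht0 : (0:ℝ) < t := lt_of_le_of_lt (by positivity) ht
    have htμ : μ < t := lt_of_le_of_lt (le_abs_self μ) (by linarith)
    set s := Real.sqrt (t ^ 2 + x ^ 2) with hs
    have hψt := (gaussPdf_pos μ σ hσ t).ne'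
    have hψs := (gaussPdf_pos μ σ hσ s).ne'
    have hD1 : ((s - μ) ^ 2 + σ ^ 2 : ℝ) ≠ 0 := by positivity
    have htμ' : (t - μ : ℝ) ≠ 0 := by linarith
    unfold millsLower
    field_simp
  have hB : Tendsto (fun t : ℝ => (σ ^ 2 * gaussPdf μ σ (Real.sqrt (t ^ 2 + x ^ 2)) /
      (Real.sqrt (t ^ 2 + x ^ 2) - μ)) / millsLower μ σ t) atTop
      (𝓝 (Real.exp (-x ^ 2 / (2 * σ ^ 2)))) := by
    have h := (pdf_ratio_tendsto μ σ hσ x).mul (rB_tendsto μ σ x hσ)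
    rw [mul_one] at h
    apply h.congr'
    filter_upwards [eventually_gt_atTop (|μ| + 1 : ℝ)] with t ht
    have ht0 : (0:ℝ) < t := lt_of_le_of_lt (by positivity) ht
    have htμ : μ < t := lt_of_le_of_lt (le_abs_self μ) (by linarith)
    set s := Real.sqrt (t ^ 2 + x ^ 2) with hs
    have hst : t ≤ s := s_ge t ht0.le
    have hψt := (gaussPdf_pos μ σ hσ t).ne'
    have hψs := (gaussPdf_pos μ σ hσ s).ne'
    have hD1 : ((t - μ) ^ 2 + σ ^ 2 : ℝ) ≠ 0 := by positivity
    have htμ' : (t - μ : ℝ) ≠ 0 := by linarith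
    have hsμ' : (s - μ : ℝ) ≠ 0 := by linarith
    unfold millsLower
    field_simp
  apply tendsto_of_tendsto_of_tendsto_of_le_of_le' hA hB
  · filter_upwards [eventually_gt_atTop (|μ| + 1 : ℝ)] with t ht
    have ht0 : (0:ℝ) < t := lt_of_le_of_lt (by positivity) ht
    have htμ : μ < t := lt_of_le_of_lt (le_abs_self μ) (by linarith)
    set s := Real.sqrt (t ^ 2 + x ^ 2) with hs
    have hst : t ≤ s := s_ge t ht0.le
    have hsμ : μ < s := lt_of_lt_of_le htμ hst
    exact div_le_div₀ (surv_nonneg μ σ hσ s) (le_surv μ σ hσ s)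
      (surv_pos μ σ hσ t htμ) (surv_le μ σ hσ t htμ)
  · filter_upwards [eventually_gt_atTop (|μ| + 1 : ℝ)] with t ht
    have ht0 : (0:ℝ) < t := lt_of_le_of_lt (by positivity) ht
    have htμ : μ < t := lt_of_le_of_lt (le_abs_self μ) (by linarith)
    set s := Real.sqrt (t ^ 2 + x ^ 2) with hs
    have hst : t ≤ s := s_ge t ht0.le
    have hsμ : μ < s := lt_of_lt_of_le htμ hst
    have hUs : (0:ℝ) ≤ σ ^ 2 * gaussPdf μ σ s / (s - μ) := by
      have := (gaussPdf_pos μ σ hσ s).le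
      have h2 : (0:ℝ) < s - μ := by linarith
      positivity
    exact div_le_div₀ hUs (surv_le μ σ hσ s hsμ)
      (millsLower_pos μ σ hσ t htμ) (le_surv μ σ hσ t)

/-- with `T(x) = exp(x²)` (so `t ⋆ x = √(t² + x²)` and `T'(x) = 2x exp(x²)`),
the function `x ↦ φ(x)/T'(x)` is `T`-regularly varying with index `−1/(2σ²) − 1` and the
Gaussian survival function `Φ̄` is `T`-regularly varying with index `−1/(2σ²)`:
`Φ̄(√(t²+x²))/Φ̄(t) → exp(x²)^{−1/(2σ²)}` as `t → ∞`, for all `x ≥ 0`. -/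
theorem gaussian_T_regular_variation (μ σ : ℝ) (hσ : 0 < σ) :
    ∀ x : ℝ, 0 ≤ x →
      Tendsto (fun t =>
          (gaussPdf μ σ (Real.sqrt (t ^ 2 + x ^ 2)) /
            (2 * Real.sqrt (t ^ 2 + x ^ 2) * Real.exp (Real.sqrt (t ^ 2 + x ^ 2) ^ 2))) /
          (gaussPdf μ σ t / (2 * t * Real.exp (t ^ 2))))
        atTop (𝓝 (Real.exp (x ^ 2) ^ (-(1 : ℝ) / (2 * σ ^ 2) - 1))) ∧
      Tendsto (fun t => gaussSurv μ σ (Real.sqrt (t ^ 2 + x ^ 2)) / gaussSurv μ σ t)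
        atTop (𝓝 (Real.exp (x ^ 2) ^ (-(1 : ℝ) / (2 * σ ^ 2)))) := by
  intro x hx
  exact ⟨part1 μ σ hσ x hx, part2 μ σ hσ x hx⟩
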